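/- The Y-system of type A_2 has period 10: the sequence in Q(u_1, u_2) defined by Y_1(0) = u_1, Y_2(0) = u_2 and the recurrence Y_i(k+1) = Y_i(k) ∏_j (Y_j(k)+1)^{a_ij} if ε(i) = (-1)^{k+1}, and Y_i(k+1) = Y_i(k)^{-1} if ε(i) = (-1)^k, where A = [[0,1],[1,0]], ε(1) = -1, ε(2) = +1, satisfies Y_1(10) = u_1 and Y_2(10) = u_2. -/

import Mathlib

set_option maxHeartbeats 1000000 in
/-- The Y-system of type A₂ has period 10.  Work in `ℚ(u₁, u₂)`; vertex `0`
has `ε = -1` and vertex `1` has `ε = +1`; the incidence matrix is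
`a₀₁ = a₁₀ = 1`, `a₀₀ = a₁₁ = 0`.  At step `k`, a vertex `i` with
`ε(i) = (-1)^(k+1)` is multiplied by `∏_j (Y_j + 1)^(a_ij)`, and a vertex with
`ε(i) = (-1)^k` is inverted.  Then `Y(10) = Y(0)`. -/
theorem typeA2_Ysystem_period_ten
    (Y : ℕ → Fin 2 → FractionRing (MvPolynomial (Fin 2) ℚ)) :
    let F := FractionRing (MvPolynomial (Fin 2) ℚ)
    let u : Fin 2 → F := fun i => algebraMap (MvPolynomial (Fin 2) ℚ) F (MvPolynomial.X i)
    let ε : Fin 2 → ℤ := fun i => if i = 0 then -1 else 1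
    let a : Fin 2 → Fin 2 → ℕ := fun i j => if i = j then 0 else 1
    (∀ i, Y 0 i = u i) →
    (∀ k i, Y (k + 1) i =
      if ε i = (-1 : ℤ) ^ (k + 1)
      then Y k i * ∏ j, (Y k j + 1) ^ (a i j)
      else (Y k i)⁻¹) →
    (Y 10 0 = u 0 ∧ Y 10 1 = u 1) := by
  intro F u ε a h0 hrec
  have key : ∀ p : MvPolynomial (Fin 2) ℚ,
      MvPolynomial.eval (fun _ => (1:ℚ)) p ≠ 0 →
      (algebraMap (MvPolynomial (Fin 2) ℚ) F) p ≠ 0 := by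
    intro p hp h
    apply hp
    have : p = 0 := (map_eq_zero_iff _
      (IsFractionRing.injective (MvPolynomial (Fin 2) ℚ) F)).mp h
    rw [this]; simp
  have hA : u 0 ≠ 0 := key (MvPolynomial.X 0) (by simp)
  have hB : u 1 ≠ 0 := key (MvPolynomial.X 1) (by simp)
  have hA1 : u 0 + 1 ≠ 0 := by
    have e : u 0 + 1 = algebraMap (MvPolynomial (Fin 2) ℚ) F (MvPolynomial.X 0 + 1) := by
      simp [u]
    rw [e]; exact key _ (by norm_num)
  have hB1 : u 1 + 1 ≠ 0 := by
    have e : u 1 + 1 = algebraMap (MvPolynomial (Fin 2) ℚ) F (MvPolynomial.X 1 + 1) := by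
      simp [u]
    rw [e]; exact key _ (by norm_num)
  have hAB : u 0 * u 1 + u 0 + 1 ≠ 0 := by
    have e : u 0 * u 1 + u 0 + 1 =
        algebraMap (MvPolynomial (Fin 2) ℚ) F
          (MvPolynomial.X 0 * MvPolynomial.X 1 + MvPolynomial.X 0 + 1) := by
      simp [u]
    rw [e]; exact key _ (by norm_num)
  -- step 1
  have h10 : Y 1 0 = u 0 * (u 1 + 1) := by
    have h := hrec 0 0
    norm_num [ε, a, Fin.prod_univ_two, h0] at h
    exact h
  have h11 : Y 1 1 = (u 1)⁻¹ := by
    have h := hrec 0 1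
    norm_num [ε, a, Fin.prod_univ_two, h0] at h
    exact h
  -- step 2
  have h20 : Y 2 0 = (u 0 * (u 1 + 1))⁻¹ := by
    have h := hrec 1 0
    norm_num [ε, a, Fin.prod_univ_two] at h
    rw [h, h10]
  have h21 : Y 2 1 = (u 0 * u 1 + u 0 + 1) / u 1 := by
    have h := hrec 1 1
    norm_num [ε, a, Fin.prod_univ_two] at h
    rw [h, h10, h11]
    field_simp
  -- step 3
  have h30 : Y 3 0 = (u 0 + 1) / (u 0 * u 1) := by
    have h := hrec 2 0
    norm_num [ε, a, Fin.prod_univ_two] at h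
    rw [h, h20, h21]
    field_simp
    ring
  have h31 : Y 3 1 = u 1 / (u 0 * u 1 + u 0 + 1) := by
    have h := hrec 2 1
    norm_num [ε, a, Fin.prod_univ_two] at h
    rw [h, h21]
    rw [inv_div]
  -- step 4
  have h40 : Y 4 0 = u 0 * u 1 / (u 0 + 1) := by
    have h := hrec 3 0
    norm_num [ε, a, Fin.prod_univ_two] at h
    rw [h, h30, inv_div]
  have h41 : Y 4 1 = (u 0)⁻¹ := by
    have h := hrec 3 1
    norm_num [ε, a, Fin.prod_univ_two] at h
    rw [h, h30, h31]
    field_simp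
    ring_nf
    have hAB' : 1 + u 0 + u 0 * u 1 ≠ 0 := by convert hAB using 1; ring
    have := mul_inv_cancel₀ hAB'
    linear_combination this
  -- step 5
  have h50 : Y 5 0 = u 1 := by
    have h := hrec 4 0
    norm_num [ε, a, Fin.prod_univ_two] at h
    rw [h, h40, h41]
    field_simp
    ring
  have h51 : Y 5 1 = u 0 := by
    have h := hrec 4 1
    norm_num [ε, a, Fin.prod_univ_two] at h
    rw [h, h41, inv_inv]
  -- step 6
  have h60 : Y 6 0 = (u 1)⁻¹ := by
    have h := hrec 5 0
    norm_num [ε, a, Fin.prod_univ_two] at h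
    rw [h, h50]
  have h61 : Y 6 1 = u 0 * (u 1 + 1) := by
    have h := hrec 5 1
    norm_num [ε, a, Fin.prod_univ_two] at h
    rw [h, h50, h51]
  -- step 7
  have h70 : Y 7 0 = (u 0 * u 1 + u 0 + 1) / u 1 := by
    have h := hrec 6 0
    norm_num [ε, a, Fin.prod_univ_two] at h
    rw [h, h60, h61]
    field_simp
  have h71 : Y 7 1 = (u 0 * (u 1 + 1))⁻¹ := by
    have h := hrec 6 1
    norm_num [ε, a, Fin.prod_univ_two] at h
    rw [h, h61]
  -- step 8
  have h80 : Y 8 0 = u 1 / (u 0 * u 1 + u 0 + 1) := by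
    have h := hrec 7 0
    norm_num [ε, a, Fin.prod_univ_two] at h
    rw [h, h70, inv_div]
  have h81 : Y 8 1 = (u 0 + 1) / (u 0 * u 1) := by
    have h := hrec 7 1
    norm_num [ε, a, Fin.prod_univ_two] at h
    rw [h, h70, h71]
    field_simp
    ring
  -- step 9
  have h90 : Y 9 0 = (u 0)⁻¹ := by
    have h := hrec 8 0
    norm_num [ε, a, Fin.prod_univ_two] at h
    rw [h, h80, h81]
    field_simp
    ring_nf
    have hAB' : 1 + u 0 + u 0 * u 1 ≠ 0 := by convert hAB using 1; ring
    have := mul_inv_cancel₀ hAB'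
    linear_combination this
  have h91 : Y 9 1 = u 0 * u 1 / (u 0 + 1) := by
    have h := hrec 8 1
    norm_num [ε, a, Fin.prod_univ_two] at h
    rw [h, h81, inv_div]
  -- step 10
  have hX0 : Y 10 0 = u 0 := by
    have h := hrec 9 0
    norm_num [ε, a, Fin.prod_univ_two] at h
    rw [h, h90, inv_inv]
  have hX1 : Y 10 1 = u 1 := by
    have h := hrec 9 1
    norm_num [ε, a, Fin.prod_univ_two] at h
    rw [h, h90, h91]
    field_simp
    ring
  exact ⟨hX0, hX1⟩
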